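/- arXiv:1501.01414 — 2 statements merged into one kernel-verified Lean document; each statement's English description precedes it below -/
import Mathlib

section
/- Let d ≥ 1 be an integer and let s ≤ 0 ≤ k be real numbers. For a Schwartz function g : ℝ^d → ℂ define ‖g‖_{H^σ}² = ∫_{ℝ^d} (1+|ξ|²)^σ |ĝ(ξ)|² dξ, where ĝ(ξ) = ∫_{ℝ^d} e^{−i x·ξ} g(x) dx. Then there exists a constant C > 0 such that for every Schwartz function f and every v ∈ ℝ^d with |v| ≥ 1, the modulated function f_v(x) = e^{−i v·x} f(x) satisfies ‖f_v‖_{H^s} ≤ C ( |v|^s ‖f‖_{L²} + |v|^{−k} ‖f‖_{H^k} ). -/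
open MeasureTheory FourierTransform Real SchwartzMap
open scoped RealInnerProductSpace ComplexConjugate

/-- The Fourier transform `ĝ(ξ) = ∫ e^{-i x·ξ} g(x) dx`. -/
noncomputable def fourierT {d : ℕ} (g : EuclideanSpace ℝ (Fin d) → ℂ)
    (ξ : EuclideanSpace ℝ (Fin d)) : ℂ :=
  ∫ x : EuclideanSpace ℝ (Fin d), Complex.exp (-(Complex.I * ((⟪x, ξ⟫ : ℝ) : ℂ))) * g x

/-- The Sobolev norm `‖g‖_{H^σ} = (∫ (1+|ξ|²)^σ |ĝ(ξ)|² dξ)^{1/2}`. -/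
noncomputable def sobolevNorm {d : ℕ} (σ : ℝ) (g : EuclideanSpace ℝ (Fin d) → ℂ) : ℝ :=
  Real.sqrt (∫ ξ : EuclideanSpace ℝ (Fin d), (1 + ‖ξ‖^2) ^ σ * ‖fourierT g ξ‖^2)

/-- The `L²` norm `‖g‖_{L²} = (∫ |g(x)|² dx)^{1/2}`. -/
noncomputable def l2Norm {d : ℕ} (g : EuclideanSpace ℝ (Fin d) → ℂ) : ℝ :=
  Real.sqrt (∫ x : EuclideanSpace ℝ (Fin d), ‖g x‖^2)

section Aux

variable {d : ℕ}

lemma fourierT_eq (g : EuclideanSpace ℝ (Fin d) → ℂ) (ξ : EuclideanSpace ℝ (Fin d)) :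
    fourierT g ξ = 𝓕 g ((2 * π)⁻¹ • ξ) := by
  rw [Real.fourier_eq']
  unfold fourierT
  congr 1
  ext x
  rw [real_inner_smul_right, smul_eq_mul]
  have h : -2 * π * ((2 * π)⁻¹ * ⟪x, ξ⟫) = -⟪x, ξ⟫ := by field_simp
  rw [h]
  push_cast
  ring_nf

lemma fourierT_modulation (f : EuclideanSpace ℝ (Fin d) → ℂ) (v ξ : EuclideanSpace ℝ (Fin d)) :
    fourierT (fun x => Complex.exp (-(Complex.I * ((⟪v, x⟫ : ℝ) : ℂ))) * f x) ξ
      = fourierT f (ξ + v) := by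
  unfold fourierT
  congr 1
  ext x
  rw [← mul_assoc, ← Complex.exp_add, inner_add_right, real_inner_comm v x]
  push_cast
  ring_nf

lemma fourier_conj (h : EuclideanSpace ℝ (Fin d) → ℂ) (x : EuclideanSpace ℝ (Fin d)) :
    𝓕 (fun ξ => conj (h ξ)) x = conj (𝓕 h (-x)) := by
  rw [Real.fourier_eq', Real.fourier_eq', ← integral_conj]
  congr 1
  ext v
  rw [smul_eq_mul, smul_eq_mul, map_mul, inner_neg_right]
  congr 1
  rw [← Complex.exp_conj]
  congr 1
  rw [map_mul, Complex.conj_I, Complex.conj_ofReal]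
  push_cast
  ring

lemma plancherel_schwartz (f : SchwartzMap (EuclideanSpace ℝ (Fin d)) ℂ) :
    ∫ ξ : EuclideanSpace ℝ (Fin d), ‖𝓕 (⇑f) ξ‖ ^ 2 = ∫ x, ‖f x‖ ^ 2 := by
  have hFf : ⇑(fourierTransformCLM ℂ f) = 𝓕 ⇑f := by
    ext ξ; rw [fourierTransformCLM_apply, SchwartzMap.fourier_coe]
  have hint : Integrable (⇑f) := f.integrable
  have hFint : Integrable (𝓕 ⇑f) := hFf ▸ (fourierTransformCLM ℂ f).integrable
  set g : EuclideanSpace ℝ (Fin d) → ℂ := fun ξ => conj (𝓕 (⇑f) ξ) with hg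
  have hgint : Integrable g := by
    refine hFint.norm.mono' ?_ ?_
    · exact (Complex.continuous_conj.comp_aestronglyMeasurable hFint.1)
    · filter_upwards with ξ; simp [g]
  have hflip : (innerₗ (EuclideanSpace ℝ (Fin d))).flip = innerₗ (EuclideanSpace ℝ (Fin d)) := by
    apply LinearMap.ext; intro x; apply LinearMap.ext; intro y
    simp [real_inner_comm]
  have mult := VectorFourier.integral_fourierIntegral_smul_eq_flip
    (L := innerₗ (EuclideanSpace ℝ (Fin d))) Real.continuous_fourierChar
    (by exact continuous_inner) hint hgint
  rw [hflip] at mult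
  have hFg : ∀ x, VectorFourier.fourierIntegral Real.fourierChar volume
      (innerₗ (EuclideanSpace ℝ (Fin d))) g x = conj (f x) := by
    intro x
    have h1 : VectorFourier.fourierIntegral Real.fourierChar volume
        (innerₗ (EuclideanSpace ℝ (Fin d))) g x = 𝓕 g x := rfl
    rw [h1, fourier_conj, ← Real.fourierInv_eq_fourier_neg,
      f.continuous.fourierInv_fourier_eq hint hFint]
  simp only [hFg] at mult
  have hL : ∀ x, VectorFourier.fourierIntegral Real.fourierChar volume
      (innerₗ (EuclideanSpace ℝ (Fin d))) (⇑f) x = 𝓕 (⇑f) x := fun _ => rfl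
  simp only [hL, smul_eq_mul] at mult
  have lhs : ∀ z : ℂ, z * conj z = ((‖z‖ ^ 2 : ℝ) : ℂ) := by
    intro z; rw [Complex.mul_conj']; norm_cast
  simp only [hg] at mult
  simp only [lhs] at mult
  have key : ∀ h : EuclideanSpace ℝ (Fin d) → ℝ,
      ∫ x, ((h x : ℝ) : ℂ) = ((∫ x, h x : ℝ) : ℂ) := fun h =>
    Complex.ofRealLI.integral_comp_comm h
  rw [key, key] at mult
  exact_mod_cast mult

lemma integrable_weight_mul_sq (f : SchwartzMap (EuclideanSpace ℝ (Fin d)) ℂ) (n : ℕ)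
    (W : EuclideanSpace ℝ (Fin d) → ℝ) (hWc : Continuous W)
    (hW : ∀ ξ, |W ξ| ≤ (1 + ‖ξ‖) ^ n) :
    Integrable (fun ξ => W ξ * ‖fourierT (⇑f) ξ‖ ^ 2) := by
  set g := fourierTransformCLM ℂ f with hgdef
  have hπ0 : (0:ℝ) < 2 * π := by positivity
  have hπ1 : (1:ℝ) ≤ 2 * π := by nlinarith [Real.pi_gt_three]
  have hF : ∀ ξ, fourierT (⇑f) ξ = g ((2 * π)⁻¹ • ξ) := by
    intro ξ; rw [fourierT_eq]
    rw [show ⇑g = 𝓕 ⇑f from by ext w; rw [hgdef, fourierTransformCLM_apply, SchwartzMap.fourier_coe]]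
  obtain ⟨M₀, hM₀⟩ : ∃ M₀, ∀ w, (1 + ‖w‖) ^ n * ‖g w‖ ≤ M₀ := by
    refine ⟨2 ^ n * (Finset.Iic (n, 0)).sup
      (fun m => SchwartzMap.seminorm ℝ m.1 m.2) g, fun w => ?_⟩
    have := SchwartzMap.one_add_le_sup_seminorm_apply (𝕜 := ℝ) (m := (n, 0))
      le_rfl le_rfl g w
    simpa [norm_iteratedFDeriv_zero] using this
  have hgi : Integrable (fun ξ => g ((2 * π)⁻¹ • ξ)) :=
    g.integrable.comp_smul (inv_ne_zero (ne_of_gt hπ0))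
  have hbound : ∀ ξ, ‖W ξ * ‖fourierT (⇑f) ξ‖ ^ 2‖
      ≤ ((2 * π) ^ n * M₀) * ‖g ((2 * π)⁻¹ • ξ)‖ := by
    intro ξ
    set w := (2 * π)⁻¹ • ξ with hw
    have hwn : ‖ξ‖ = (2 * π) * ‖w‖ := by
      rw [hw, norm_smul, Real.norm_eq_abs, abs_of_pos (inv_pos.2 hπ0)]
      field_simp
    have h1 : (1 + ‖ξ‖) ^ n ≤ (2 * π) ^ n * (1 + ‖w‖) ^ n := by
      rw [← mul_pow]
      apply pow_le_pow_left₀ (by positivity)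
      nlinarith [norm_nonneg w]
    have h2 : (0:ℝ) ≤ ‖g w‖ := norm_nonneg _
    calc ‖W ξ * ‖fourierT (⇑f) ξ‖ ^ 2‖ = |W ξ| * ‖fourierT (⇑f) ξ‖ ^ 2 := by
          rw [Real.norm_eq_abs, abs_mul, abs_of_nonneg (pow_nonneg (norm_nonneg _) 2)]
      _ = |W ξ| * (‖g w‖ * ‖g w‖) := by rw [hF ξ]; ring
      _ ≤ (1 + ‖ξ‖) ^ n * (‖g w‖ * ‖g w‖) := by
          apply mul_le_mul_of_nonneg_right (hW ξ) (by positivity)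
      _ ≤ ((2 * π) ^ n * (1 + ‖w‖) ^ n) * (‖g w‖ * ‖g w‖) := by
          apply mul_le_mul_of_nonneg_right h1 (by positivity)
      _ = (2 * π) ^ n * (((1 + ‖w‖) ^ n * ‖g w‖) * ‖g w‖) := by ring
      _ ≤ (2 * π) ^ n * (M₀ * ‖g w‖) := by
          apply mul_le_mul_of_nonneg_left _ (by positivity)
          exact mul_le_mul_of_nonneg_right (hM₀ w) h2
      _ = ((2 * π) ^ n * M₀) * ‖g w‖ := by ring
  refine ((hgi.norm.const_mul ((2 * π) ^ n * M₀)).mono' ?_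
    (Filter.Eventually.of_forall hbound))
  have hc : Continuous fun ξ : EuclideanSpace ℝ (Fin d) => g ((2 * π)⁻¹ • ξ) :=
    (map_continuous g).comp (continuous_const_smul _)
  have : Continuous fun ξ => W ξ * ‖fourierT (⇑f) ξ‖ ^ 2 := by
    have : (fun ξ => W ξ * ‖fourierT (⇑f) ξ‖ ^ 2)
        = fun ξ => W ξ * ‖g ((2 * π)⁻¹ • ξ)‖ ^ 2 := by
      ext ξ; rw [hF ξ]
    rw [this]
    exact hWc.mul (hc.norm.pow 2)
  exact this.aestronglyMeasurable

lemma integral_fourierT_sq (f : SchwartzMap (EuclideanSpace ℝ (Fin d)) ℂ) :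
    ∫ ξ, ‖fourierT (⇑f) ξ‖ ^ 2 = (2 * π) ^ d * ∫ x, ‖f x‖ ^ 2 := by
  have hπ0 : (0:ℝ) < 2 * π := by positivity
  have h1 : (fun ξ : EuclideanSpace ℝ (Fin d) => ‖fourierT (⇑f) ξ‖ ^ 2)
      = fun ξ => (fun w => ‖𝓕 (⇑f) w‖ ^ 2) ((2 * π)⁻¹ • ξ) := by
    ext ξ; rw [fourierT_eq]
  rw [h1, MeasureTheory.Measure.integral_comp_inv_smul volume
    (fun w => ‖𝓕 (⇑f) w‖ ^ 2) (2 * π), plancherel_schwartz f]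
  rw [finrank_euclideanSpace_fin, abs_of_pos (by positivity), smul_eq_mul]

lemma pointwise_bound {s k : ℝ} (hs : s ≤ 0) (hk : 0 ≤ k)
    (v η : EuclideanSpace ℝ (Fin d)) (hv : 1 ≤ ‖v‖) :
    (1 + ‖η - v‖ ^ 2) ^ s
      ≤ ((4:ℝ) ^ (-s) + 4 ^ k) * (‖v‖ ^ (2*s) + ‖v‖ ^ (-(2*k)) * (1 + ‖η‖ ^ 2) ^ k) := by
  have hv0 : (0:ℝ) < ‖v‖ := lt_of_lt_of_le one_pos hv
  have a1 : (0:ℝ) ≤ ‖v‖ ^ (2*s) := Real.rpow_nonneg hv0.le _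
  have a2 : (0:ℝ) ≤ ‖v‖ ^ (-(2*k)) := Real.rpow_nonneg hv0.le _
  have a3 : (0:ℝ) ≤ (1 + ‖η‖ ^ 2) ^ k := Real.rpow_nonneg (by positivity) _
  have A1 : (0:ℝ) < (4:ℝ) ^ (-s) := Real.rpow_pos_of_pos (by norm_num) _
  have A2 : (0:ℝ) < (4:ℝ) ^ k := Real.rpow_pos_of_pos (by norm_num) _
  have e1 : (‖v‖ ^ 2 : ℝ) ^ s = ‖v‖ ^ (2*s) := by
    rw [← Real.rpow_natCast ‖v‖ 2, ← Real.rpow_mul hv0.le]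
    norm_num
  have e2 : (‖v‖ ^ 2 : ℝ) ^ k = ‖v‖ ^ (2*k) := by
    rw [← Real.rpow_natCast ‖v‖ 2, ← Real.rpow_mul hv0.le]
    norm_num
  by_cases hcase : ‖η‖ ≤ ‖v‖ / 2
  · -- low frequencies
    have h1 : ‖v‖ / 2 ≤ ‖η - v‖ := by
      have h := norm_sub_norm_le v η
      rw [← norm_sub_rev η v] at h
      linarith
    have h3 : (‖v‖ / 2) ^ 2 ≤ 1 + ‖η - v‖ ^ 2 := by
      nlinarith [norm_nonneg (η - v)]
    have h4 : (1 + ‖η - v‖ ^ 2) ^ s ≤ ((‖v‖ / 2) ^ 2 : ℝ) ^ s :=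
      Real.rpow_le_rpow_of_nonpos (by positivity) h3 hs
    have h5 : ((‖v‖ / 2) ^ 2 : ℝ) ^ s = ‖v‖ ^ (2*s) * ((4:ℝ) ^ s)⁻¹ := by
      rw [div_pow, show ((2:ℝ)^2 : ℝ) = 4 by norm_num,
        Real.div_rpow (by positivity) (by norm_num), e1, div_eq_mul_inv]
    have h6 : ((4:ℝ) ^ s)⁻¹ = (4:ℝ) ^ (-s) := (Real.rpow_neg (by norm_num) s).symm
    have h7 : (1 + ‖η - v‖ ^ 2) ^ s ≤ (4:ℝ) ^ (-s) * ‖v‖ ^ (2*s) := by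
      rw [h5, h6] at h4; linarith [h4]
    nlinarith [mul_nonneg a2 a3]
  · -- high frequencies
    push_neg at hcase
    have hL : (1 + ‖η - v‖ ^ 2) ^ s ≤ 1 :=
      Real.rpow_le_one_of_one_le_of_nonpos (by nlinarith [sq_nonneg ‖η - v‖]) hs
    have h6 : (‖v‖ ^ 2 / 4 : ℝ) ≤ 1 + ‖η‖ ^ 2 := by nlinarith
    have h7 : ((‖v‖ ^ 2 / 4 : ℝ)) ^ k ≤ (1 + ‖η‖ ^ 2) ^ k :=
      Real.rpow_le_rpow (by positivity) h6 hk
    have h8 : ((‖v‖ ^ 2 / 4 : ℝ)) ^ k = ‖v‖ ^ (2*k) / (4:ℝ) ^ k := by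
      rw [Real.div_rpow (by positivity) (by norm_num), e2]
    have h9 : ‖v‖ ^ (-(2*k)) * ‖v‖ ^ (2*k) = 1 := by
      rw [← Real.rpow_add hv0]; norm_num
    have h10 : (1:ℝ) ≤ (4:ℝ) ^ k * (‖v‖ ^ (-(2*k)) * (1 + ‖η‖ ^ 2) ^ k) := by
      have h11 : ‖v‖ ^ (2*k) / (4:ℝ) ^ k ≤ (1 + ‖η‖ ^ 2) ^ k := h8 ▸ h7
      have h12 : ‖v‖ ^ (-(2*k)) * (‖v‖ ^ (2*k) / (4:ℝ) ^ k)
          ≤ ‖v‖ ^ (-(2*k)) * (1 + ‖η‖ ^ 2) ^ k :=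
        mul_le_mul_of_nonneg_left h11 a2
      have h13 : ‖v‖ ^ (-(2*k)) * (‖v‖ ^ (2*k) / (4:ℝ) ^ k) = ((4:ℝ) ^ k)⁻¹ := by
        field_simp
        nlinarith [h9]
      calc (1:ℝ) = (4:ℝ) ^ k * ((4:ℝ) ^ k)⁻¹ := by field_simp
        _ ≤ (4:ℝ) ^ k * (‖v‖ ^ (-(2*k)) * (1 + ‖η‖ ^ 2) ^ k) := by
            apply mul_le_mul_of_nonneg_left _ A2.le
            rw [← h13]; exact h12
    nlinarith [mul_nonneg a2 a3]

lemma sqrt_add_le' {x y : ℝ} (hx : 0 ≤ x) (hy : 0 ≤ y) :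
    Real.sqrt (x + y) ≤ Real.sqrt x + Real.sqrt y := by
  have h := Real.sqrt_le_sqrt (show x + y ≤ (Real.sqrt x + Real.sqrt y) ^ 2 by
    nlinarith [Real.sq_sqrt hx, Real.sq_sqrt hy, Real.sqrt_nonneg x, Real.sqrt_nonneg y])
  rwa [Real.sqrt_sq (by positivity)] at h

end Aux

set_option maxHeartbeats 1000000 in
theorem modulated_sobolev_upper_bound
    (d : ℕ) (hd : 1 ≤ d) (s k : ℝ) (hs : s ≤ 0) (hk : 0 ≤ k) :
    ∃ C : ℝ, 0 < C ∧
      ∀ (f : SchwartzMap (EuclideanSpace ℝ (Fin d)) ℂ) (v : EuclideanSpace ℝ (Fin d)),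
        1 ≤ ‖v‖ →
        sobolevNorm s (fun x => Complex.exp (-(Complex.I * ((⟪v, x⟫ : ℝ) : ℂ))) * f x)
          ≤ C * (‖v‖ ^ s * l2Norm (fun x => f x) + ‖v‖ ^ (-k) * sobolevNorm k (fun x => f x)) := by
  have hπ0 : (0:ℝ) < 2 * π := by positivity
  set A : ℝ := (4:ℝ) ^ (-s) + 4 ^ k with hA
  have hApos : 0 < A := by
    rw [hA]
    have h1 := Real.rpow_pos_of_pos (show (0:ℝ) < 4 by norm_num) (-s)
    have h2 := Real.rpow_pos_of_pos (show (0:ℝ) < 4 by norm_num) k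
    linarith
  set B : ℝ := (2 * π) ^ d with hB
  have hBpos : 0 < B := by positivity
  refine ⟨Real.sqrt A * (Real.sqrt B + 1) + 1, by positivity, ?_⟩
  intro f v hv
  have hv0 : (0:ℝ) < ‖v‖ := lt_of_lt_of_le one_pos hv
  set P : ℝ := ∫ x, ‖f x‖ ^ 2 with hP
  set Q : ℝ := ∫ ξ : EuclideanSpace ℝ (Fin d), (1 + ‖ξ‖ ^ 2) ^ k * ‖fourierT (⇑f) ξ‖ ^ 2 with hQ
  have hPnn : 0 ≤ P := integral_nonneg fun x => by positivity
  have hQnn : 0 ≤ Q := integral_nonneg fun ξ =>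
    mul_nonneg (Real.rpow_nonneg (by positivity) _) (pow_nonneg (norm_nonneg _) 2)
  -- integrability
  have Ik : Integrable (fun ξ : EuclideanSpace ℝ (Fin d) =>
      (1 + ‖ξ‖ ^ 2) ^ k * ‖fourierT (⇑f) ξ‖ ^ 2) := by
    apply integrable_weight_mul_sq f (2 * ⌈k⌉₊)
    · exact (continuous_const.add ((continuous_norm).pow 2)).rpow_const
        fun x => Or.inr hk
    · intro ξ
      rw [abs_of_nonneg (Real.rpow_nonneg (by positivity) _)]
      calc (1 + ‖ξ‖ ^ 2) ^ k ≤ (1 + ‖ξ‖ ^ 2) ^ ((⌈k⌉₊ : ℝ)) :=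
            Real.rpow_le_rpow_of_exponent_le (by nlinarith [sq_nonneg ‖ξ‖]) (Nat.le_ceil k)
        _ = (1 + ‖ξ‖ ^ 2) ^ (⌈k⌉₊ : ℕ) := Real.rpow_natCast _ _
        _ ≤ ((1 + ‖ξ‖) ^ 2) ^ (⌈k⌉₊ : ℕ) := by
            apply pow_le_pow_left₀ (by positivity)
            nlinarith [norm_nonneg ξ]
        _ = (1 + ‖ξ‖) ^ (2 * ⌈k⌉₊) := by rw [← pow_mul]
  have I0 : Integrable (fun ξ : EuclideanSpace ℝ (Fin d) => ‖fourierT (⇑f) ξ‖ ^ 2) := by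
    have h := integrable_weight_mul_sq f 0 (fun _ => 1) continuous_const
      (fun ξ => by simp)
    simpa using h
  have hFP : ∫ ξ : EuclideanSpace ℝ (Fin d), ‖fourierT (⇑f) ξ‖ ^ 2 = B * P :=
    integral_fourierT_sq f
  -- rewrite the modulated Sobolev norm
  have step1 : sobolevNorm s (fun x => Complex.exp (-(Complex.I * ((⟪v, x⟫ : ℝ) : ℂ))) * f x)
      = Real.sqrt (∫ η : EuclideanSpace ℝ (Fin d),
          (1 + ‖η - v‖ ^ 2) ^ s * ‖fourierT (⇑f) η‖ ^ 2) := by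
    unfold sobolevNorm
    congr 1
    have h1 : ∀ ξ : EuclideanSpace ℝ (Fin d),
        (1 + ‖ξ‖ ^ 2) ^ s * ‖fourierT
            (fun x => Complex.exp (-(Complex.I * ((⟪v, x⟫ : ℝ) : ℂ))) * f x) ξ‖ ^ 2
          = (fun η => (1 + ‖η - v‖ ^ 2) ^ s * ‖fourierT (⇑f) η‖ ^ 2) (ξ + v) := by
      intro ξ
      simp only
      rw [fourierT_modulation, add_sub_cancel_right]
    simp_rw [h1]
    exact MeasureTheory.integral_add_right_eq_self (μ := (volume : MeasureTheory.Measure (EuclideanSpace ℝ (Fin d)))) (fun η => (1 + ‖η - v‖ ^ 2) ^ s * ‖fourierT (⇑f) η‖ ^ 2) v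
  rw [step1]
  -- main integral estimate
  have step2 : (∫ η : EuclideanSpace ℝ (Fin d),
        (1 + ‖η - v‖ ^ 2) ^ s * ‖fourierT (⇑f) η‖ ^ 2)
      ≤ A * (‖v‖ ^ (2*s) * (B * P)) + A * (‖v‖ ^ (-(2*k)) * Q) := by
    have hmono : (∫ η : EuclideanSpace ℝ (Fin d),
          (1 + ‖η - v‖ ^ 2) ^ s * ‖fourierT (⇑f) η‖ ^ 2)
        ≤ ∫ η : EuclideanSpace ℝ (Fin d),
            (A * ‖v‖ ^ (2*s)) * ‖fourierT (⇑f) η‖ ^ 2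
              + (A * ‖v‖ ^ (-(2*k))) * ((1 + ‖η‖ ^ 2) ^ k * ‖fourierT (⇑f) η‖ ^ 2) := by
      apply integral_mono_of_nonneg
      · filter_upwards with η
        positivity
      · exact (I0.const_mul _).add (Ik.const_mul _)
      · filter_upwards with η
        have hb := pointwise_bound (d := d) hs hk v η hv
        have hnn : (0:ℝ) ≤ ‖fourierT (⇑f) η‖ ^ 2 := by positivity
        calc (1 + ‖η - v‖ ^ 2) ^ s * ‖fourierT (⇑f) η‖ ^ 2
            ≤ (A * (‖v‖ ^ (2*s) + ‖v‖ ^ (-(2*k)) * (1 + ‖η‖ ^ 2) ^ k))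
                * ‖fourierT (⇑f) η‖ ^ 2 := mul_le_mul_of_nonneg_right hb hnn
          _ = (A * ‖v‖ ^ (2*s)) * ‖fourierT (⇑f) η‖ ^ 2
              + (A * ‖v‖ ^ (-(2*k))) * ((1 + ‖η‖ ^ 2) ^ k * ‖fourierT (⇑f) η‖ ^ 2) := by ring
    rw [integral_add (I0.const_mul _) (Ik.const_mul _), integral_const_mul,
      integral_const_mul, hFP, ← hQ] at hmono
    calc (∫ η : EuclideanSpace ℝ (Fin d),
          (1 + ‖η - v‖ ^ 2) ^ s * ‖fourierT (⇑f) η‖ ^ 2)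
        ≤ A * ‖v‖ ^ (2*s) * (B * P) + A * ‖v‖ ^ (-(2*k)) * Q := hmono
      _ = A * (‖v‖ ^ (2*s) * (B * P)) + A * (‖v‖ ^ (-(2*k)) * Q) := by ring
  -- square roots
  have hvs : Real.sqrt (‖v‖ ^ (2*s)) = ‖v‖ ^ s := by
    have h : ‖v‖ ^ (2*s) = (‖v‖ ^ s) ^ 2 := by
      rw [← Real.rpow_natCast (‖v‖ ^ s) 2, ← Real.rpow_mul hv0.le]
      norm_num
      ring_nf
    rw [h, Real.sqrt_sq (Real.rpow_nonneg hv0.le _)]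
  have hvk : Real.sqrt (‖v‖ ^ (-(2*k))) = ‖v‖ ^ (-k) := by
    have h : ‖v‖ ^ (-(2*k)) = (‖v‖ ^ (-k)) ^ 2 := by
      rw [← Real.rpow_natCast (‖v‖ ^ (-k)) 2, ← Real.rpow_mul hv0.le]
      norm_num
      ring_nf
    rw [h, Real.sqrt_sq (Real.rpow_nonneg hv0.le _)]
  have hsqrtP : Real.sqrt P = l2Norm (fun x => f x) := rfl
  have hsqrtQ : Real.sqrt Q = sobolevNorm k (fun x => f x) := rfl
  have t0 : Real.sqrt (∫ η : EuclideanSpace ℝ (Fin d),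
        (1 + ‖η - v‖ ^ 2) ^ s * ‖fourierT (⇑f) η‖ ^ 2)
      ≤ Real.sqrt (A * (‖v‖ ^ (2*s) * (B * P)) + A * (‖v‖ ^ (-(2*k)) * Q)) :=
    Real.sqrt_le_sqrt step2
  have t1 : Real.sqrt (A * (‖v‖ ^ (2*s) * (B * P)) + A * (‖v‖ ^ (-(2*k)) * Q))
      ≤ Real.sqrt (A * (‖v‖ ^ (2*s) * (B * P))) + Real.sqrt (A * (‖v‖ ^ (-(2*k)) * Q)) := by
    apply sqrt_add_le'
    · exact mul_nonneg hApos.le (mul_nonneg (Real.rpow_nonneg hv0.le _)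
        (mul_nonneg hBpos.le hPnn))
    · exact mul_nonneg hApos.le (mul_nonneg (Real.rpow_nonneg hv0.le _) hQnn)
  have t2 : Real.sqrt (A * (‖v‖ ^ (2*s) * (B * P)))
      = Real.sqrt A * (Real.sqrt B * (‖v‖ ^ s * Real.sqrt P)) := by
    rw [Real.sqrt_mul hApos.le, Real.sqrt_mul (Real.rpow_nonneg hv0.le _),
      Real.sqrt_mul hBpos.le, hvs]
    ring
  have t3 : Real.sqrt (A * (‖v‖ ^ (-(2*k)) * Q))
      = Real.sqrt A * (‖v‖ ^ (-k) * Real.sqrt Q) := by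
    rw [Real.sqrt_mul hApos.le, Real.sqrt_mul (Real.rpow_nonneg hv0.le _), hvk]
  have hX : (0:ℝ) ≤ ‖v‖ ^ s * Real.sqrt P :=
    mul_nonneg (Real.rpow_nonneg hv0.le _) (Real.sqrt_nonneg _)
  have hY : (0:ℝ) ≤ ‖v‖ ^ (-k) * Real.sqrt Q :=
    mul_nonneg (Real.rpow_nonneg hv0.le _) (Real.sqrt_nonneg _)
  have hsA : (0:ℝ) ≤ Real.sqrt A := Real.sqrt_nonneg _
  have hsB : (0:ℝ) ≤ Real.sqrt B := Real.sqrt_nonneg _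
  calc Real.sqrt (∫ η : EuclideanSpace ℝ (Fin d),
        (1 + ‖η - v‖ ^ 2) ^ s * ‖fourierT (⇑f) η‖ ^ 2)
      ≤ Real.sqrt (A * (‖v‖ ^ (2*s) * (B * P))) + Real.sqrt (A * (‖v‖ ^ (-(2*k)) * Q)) :=
        le_trans t0 t1
    _ = Real.sqrt A * (Real.sqrt B * (‖v‖ ^ s * Real.sqrt P))
        + Real.sqrt A * (‖v‖ ^ (-k) * Real.sqrt Q) := by rw [t2, t3]
    _ ≤ (Real.sqrt A * (Real.sqrt B + 1) + 1)
        * (‖v‖ ^ s * Real.sqrt P + ‖v‖ ^ (-k) * Real.sqrt Q) := by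
          nlinarith [mul_nonneg hsA hX, mul_nonneg hsA hY,
            mul_nonneg (mul_nonneg hsA hsB) hY, hX, hY]
    _ = (Real.sqrt A * (Real.sqrt B + 1) + 1)
        * (‖v‖ ^ s * l2Norm (fun x => f x) + ‖v‖ ^ (-k) * sobolevNorm k (fun x => f x)) := by
        rw [hsqrtP, hsqrtQ]
end

section
/- Let d ≥ 1 be an integer, σ ∈ (0,1), p > 1 a real number, ω > 0, and v ∈ ℝ^d with v ≠ 0. For a Schwartz function g define the Fourier multiplier operators ((−Δ)^σ g)(x) = (2π)^{−d} ∫_{ℝ^d} e^{i x·ξ} |ξ|^{2σ} ĝ(ξ) dξ and (𝒫_v g)(x) = (2π)^{−d} ∫_{ℝ^d} e^{i x·ξ} p_v(ξ) ĝ(ξ) dξ, where ĝ(ξ) = ∫ e^{−i x·ξ} g(x) dx and p_v(ξ) = |ξ−v|^{2σ} − |v|^{2σ} + 2σ|v|^{2σ−2} (v·ξ). Let Q : ℝ^d → ℂ be a Schwartz function satisfying the profile equation 𝒫_v Q(x) + ω^{2σ} Q(x) − |Q(x)|^{p−1} Q(x) = 0 for all x ∈ ℝ^d. Define u(t,x)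 = e^{i t (|v|^{2σ} − ω^{2σ})} e^{−i v·x} Q(x − 2tσ|v|^{2σ−2} v). Then for every (t,x), the map t ↦ u(t,x) is differentiable and i ∂_t u(t,x) + ((−Δ)^σ u(t,·))(x) − |u(t,x)|^{p−1} u(t,x) = 0; that is, u is an exact traveling solitary-wave solution of the focusing fractional NLS i∂_t u + (−Δ)^σ u − |u|^{p−1}u = 0. -/
open scoped RealInnerProductSpace

/-- The fractional Laplacian `(-Δ)^σ`, the Fourier multiplier with symbol `|ξ|^{2σ}`:
`((-Δ)^σ g)(x) = (2π)^{-d} ∫ e^{i x·ξ} |ξ|^{2σ} ĝ(ξ) dξ`. -/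
noncomputable def fracLap {d : ℕ} (σ : ℝ) (g : EuclideanSpace ℝ (Fin d) → ℂ)
    (x : EuclideanSpace ℝ (Fin d)) : ℂ :=
  (((2 * Real.pi) ^ (-(d:ℝ)) : ℝ) : ℂ) *
    ∫ ξ : EuclideanSpace ℝ (Fin d),
      Complex.exp (Complex.I * ((⟪x, ξ⟫ : ℝ) : ℂ)) * ((‖ξ‖ ^ (2*σ) : ℝ) : ℂ) * fourierT g ξ

/-- The symbol `p_v(ξ) = |ξ-v|^{2σ} - |v|^{2σ} + 2σ|v|^{2σ-2} (v·ξ)` of the operator `𝒫_v`. -/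
noncomputable def pSymbol {d : ℕ} (σ : ℝ) (v ξ : EuclideanSpace ℝ (Fin d)) : ℝ :=
  ‖ξ - v‖ ^ (2*σ) - ‖v‖ ^ (2*σ) + 2*σ*‖v‖ ^ (2*σ - 2) * ⟪v, ξ⟫

/-- The Fourier multiplier operator `𝒫_v` with symbol `p_v`. -/
noncomputable def pOp {d : ℕ} (σ : ℝ) (v : EuclideanSpace ℝ (Fin d))
    (g : EuclideanSpace ℝ (Fin d) → ℂ) (x : EuclideanSpace ℝ (Fin d)) : ℂ :=
  (((2 * Real.pi) ^ (-(d:ℝ)) : ℝ) : ℂ) *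
    ∫ ξ : EuclideanSpace ℝ (Fin d),
      Complex.exp (Complex.I * ((⟪x, ξ⟫ : ℝ) : ℂ)) * ((pSymbol σ v ξ : ℝ) : ℂ) * fourierT g ξ

/-- The traveling solitary wave built from a profile `Q` solving the profile equation. -/
noncomputable def solitonWave {d : ℕ} (σ ω : ℝ) (v : EuclideanSpace ℝ (Fin d))
    (Q : SchwartzMap (EuclideanSpace ℝ (Fin d)) ℂ)
    (t : ℝ) (x : EuclideanSpace ℝ (Fin d)) : ℂ :=
  Complex.exp (Complex.I * (t : ℂ) * (((‖v‖ ^ (2*σ) - ω ^ (2*σ) : ℝ)) : ℂ))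
    * Complex.exp (-(Complex.I * ((⟪v, x⟫ : ℝ) : ℂ)))
    * Q (x - (2 * t * σ * ‖v‖ ^ (2*σ - 2)) • v)

open MeasureTheory FourierTransform Complex Real SchwartzMap

variable {d : ℕ}

local notation "E" => EuclideanSpace ℝ (Fin d)

lemma two_pi_pos' : (0:ℝ) < 2 * π := by positivity

lemma fourierT_eq_scaled (f : E → ℂ) (ξ : E) :
    fourierT f ξ = 𝓕 f ((2 * π)⁻¹ • ξ) := by
  rw [Real.fourier_eq']
  unfold fourierT
  congr 1
  ext x
  rw [real_inner_smul_right, smul_eq_mul]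
  congr 1
  have : -2 * π * ((2 * π)⁻¹ * ⟪x, ξ⟫) = -⟪x, ξ⟫ := by
    field_simp
  rw [this]
  push_cast
  ring

lemma fourierT_schwartz_eq (f : SchwartzMap E ℂ) (ξ : E) :
    fourierT (⇑f) ξ = (fourierTransformCLM ℂ f) ((2 * π)⁻¹ • ξ) := by
  rw [fourierT_eq_scaled, fourierTransformCLM_apply, SchwartzMap.fourier_coe]

lemma fourierT_continuous (f : SchwartzMap E ℂ) : Continuous (fourierT (⇑f)) := by
  have : fourierT (⇑f) = fun ξ => (fourierTransformCLM ℂ f) ((2 * π)⁻¹ • ξ) := by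
    ext ξ; exact fourierT_schwartz_eq f ξ
  rw [this]
  exact (fourierTransformCLM ℂ f).continuous.comp (continuous_const_smul _)

lemma integrable_weight (f : SchwartzMap E ℂ) :
    Integrable (fun ξ : E => (2 + 2 * ‖ξ‖ ^ 2) * ‖fourierT (⇑f) ξ‖) := by
  set S := fourierTransformCLM ℂ f with hS
  have h2π : ((2 * π)⁻¹ : ℝ) ≠ 0 := by positivity
  have hG : Integrable (fun u : E => (2 + 2 * (2*π)^2 * ‖u‖ ^ 2) * ‖S u‖) := by
    have h1 : Integrable (fun u : E => 2 * ‖S u‖) := (S.integrable.norm.const_mul 2)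
    have h2 : Integrable (fun u : E => (2 * (2*π)^2) * (‖u‖ ^ 2 * ‖S u‖)) :=
      (S.integrable_pow_mul volume 2).const_mul _
    refine (h1.add h2).congr ?_
    filter_upwards with u
    simp only [Pi.add_apply]; ring
  have := (integrable_comp_smul_iff volume
    (fun u : E => (2 + 2 * (2*π)^2 * ‖u‖ ^ 2) * ‖S u‖) h2π).2 hG
  convert this using 1
  ext ξ
  rw [fourierT_schwartz_eq]
  congr 2
  rw [norm_smul]
  have : ‖(2*π)⁻¹‖ = (2*π)⁻¹ := by
    rw [Real.norm_eq_abs, abs_of_pos]; positivity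
  rw [this]
  field_simp

lemma norm_exp_I_mul_real (r : ℝ) : ‖Complex.exp (Complex.I * (r:ℂ))‖ = 1 := by
  rw [mul_comm]
  exact Complex.norm_exp_ofReal_mul_I r

lemma integrable_symbol_mul (f : SchwartzMap E ℂ) (φ : E → ℝ) (hφ : Continuous φ)
    (C : ℝ) (hb : ∀ ξ : E, |φ ξ| ≤ C * (1 + ‖ξ‖) ^ 2) (y : E) :
    Integrable (fun ξ : E =>
      Complex.exp (Complex.I * ((⟪y, ξ⟫ : ℝ) : ℂ)) * ((φ ξ : ℝ) : ℂ) * fourierT (⇑f) ξ) := by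
  have hC : 0 ≤ C := by
    have h1 : |φ 0| ≤ C := by simpa using hb 0
    linarith [abs_nonneg (φ 0)]
  have hmaj : Integrable (fun ξ : E => C * ((2 + 2 * ‖ξ‖ ^ 2) * ‖fourierT (⇑f) ξ‖)) :=
    (integrable_weight f).const_mul C
  refine hmaj.mono' ?_ ?_
  · apply Continuous.aestronglyMeasurable
    apply Continuous.mul
    apply Continuous.mul
    · exact Complex.continuous_exp.comp (continuous_const.mul
        (Complex.continuous_ofReal.comp (continuous_const.inner continuous_id)))
    · exact Complex.continuous_ofReal.comp hφ
    · exact fourierT_continuous f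
  · filter_upwards with ξ
    rw [norm_mul, norm_mul, norm_exp_I_mul_real, one_mul, Complex.norm_real]
    have h1 : |φ ξ| ≤ C * (2 + 2 * ‖ξ‖ ^ 2) := by
      refine (hb ξ).trans ?_
      have : (1 + ‖ξ‖) ^ 2 ≤ 2 + 2 * ‖ξ‖ ^ 2 := by nlinarith [norm_nonneg ξ, sq_nonneg (1 - ‖ξ‖)]
      nlinarith [norm_nonneg ξ]
    calc |φ ξ| * ‖fourierT (⇑f) ξ‖ ≤ (C * (2 + 2 * ‖ξ‖ ^ 2)) * ‖fourierT (⇑f) ξ‖ := by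
          exact mul_le_mul_of_nonneg_right h1 (norm_nonneg _)
      _ = C * ((2 + 2 * ‖ξ‖ ^ 2) * ‖fourierT (⇑f) ξ‖) := by ring

lemma substitution_lemma (f : SchwartzMap E ℂ) (g : E → ℂ) (y : E) :
    ∫ ξ : E, Complex.exp (Complex.I * ((⟪y, ξ⟫ : ℝ) : ℂ)) * g ξ * fourierT (⇑f) ξ
      = ((2 * π : ℝ) ^ d : ℝ) •
        ∫ u : E, Complex.exp (Complex.I * ((⟪y, (2*π) • u⟫ : ℝ) : ℂ)) * g ((2*π) • u) * 𝓕 (⇑f) u := by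
  have h2π : (0:ℝ) < 2*π := two_pi_pos'
  have h := MeasureTheory.Measure.integral_comp_smul_of_nonneg (μ := (volume : Measure E))
    (fun ξ : E => Complex.exp (Complex.I * ((⟪y, ξ⟫ : ℝ) : ℂ)) * g ξ * fourierT (⇑f) ξ) (2*π)
    (hR := h2π.le)
  rw [finrank_euclideanSpace_fin] at h
  have heq : ∀ u : E,
      Complex.exp (Complex.I * ((⟪y, (2*π) • u⟫ : ℝ) : ℂ)) * g ((2*π) • u) * fourierT (⇑f) ((2*π) • u)
      = Complex.exp (Complex.I * ((⟪y, (2*π) • u⟫ : ℝ) : ℂ)) * g ((2*π) • u) * 𝓕 (⇑f) u := by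
    intro u
    rw [fourierT_eq_scaled, smul_smul, inv_mul_cancel₀ h2π.ne', one_smul]
  simp_rw [heq] at h
  rw [h, smul_smul, mul_inv_cancel₀ (by positivity : ((2*π:ℝ))^d ≠ 0), one_smul]


lemma exp_inner_eq (y u : E) :
    Complex.exp (Complex.I * ((⟪y, (2*π) • u⟫ : ℝ) : ℂ))
      = Complex.exp ((((2 * π * ⟪u, y⟫ : ℝ)) : ℂ) * Complex.I) := by
  rw [real_inner_smul_right, real_inner_comm]
  congr 1
  push_cast
  ring

lemma fourierT_integrable_FT (f : SchwartzMap E ℂ) : Integrable (𝓕 (⇑f)) := by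
  have : 𝓕 (⇑f) = ⇑(fourierTransformCLM ℂ f) := by rw [fourierTransformCLM_apply, SchwartzMap.fourier_coe]
  rw [this]
  exact (fourierTransformCLM ℂ f).integrable

lemma inversion_formula (f : SchwartzMap E ℂ) (y : E) :
    ∫ ξ : E, Complex.exp (Complex.I * ((⟪y, ξ⟫ : ℝ) : ℂ)) * fourierT (⇑f) ξ
      = ((2 * π : ℝ) ^ d : ℝ) • (f y) := by
  have h := substitution_lemma f (fun _ => (1:ℂ)) y
  simp only [mul_one] at h
  rw [h]
  congr 1
  have hinv : 𝓕⁻ (𝓕 (⇑f)) = ⇑f :=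
    f.continuous.fourierInv_fourier_eq f.integrable (fourierT_integrable_FT f)
  conv_rhs => rw [← hinv]
  rw [Real.fourierInv_eq']
  congr 1
  ext u
  rw [exp_inner_eq, smul_eq_mul]

lemma deriv_formula (f : SchwartzMap E ℂ) (w y : E) :
    ∫ ξ : E, Complex.exp (Complex.I * ((⟪y, ξ⟫ : ℝ) : ℂ)) * ((⟪w, ξ⟫ : ℝ) : ℂ) * fourierT (⇑f) ξ
      = ((2 * π : ℝ) ^ d : ℝ) • (-Complex.I * (fderiv ℝ (⇑f) y w)) := by
  have h := substitution_lemma f (fun ξ => ((⟪w, ξ⟫ : ℝ) : ℂ)) y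
  rw [h]
  congr 1
  set gw : SchwartzMap E ℂ := LineDeriv.lineDerivOp w f with hgwdef
  have hgw : ⇑gw = fun x => fderiv ℝ (⇑f) x w := by
    ext x; exact SchwartzMap.lineDerivOp_apply_eq_fderiv w f x
  have hfd : Integrable (fderiv ℝ (⇑f)) := by
    have : fderiv ℝ (⇑f) = ⇑(SchwartzMap.fderivCLM ℝ E ℂ f) := by
      ext1 x; exact (SchwartzMap.fderivCLM_apply (𝕜 := ℝ) f x).symm
    rw [this]
    exact (SchwartzMap.fderivCLM ℝ E ℂ f).integrable
  have hF : 𝓕 (fderiv ℝ (⇑f)) = VectorFourier.fourierSMulRight (-(innerSL ℝ)) (𝓕 (⇑f)) :=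
    Real.fourier_fderiv f.integrable f.differentiable hfd
  have hgwF : ∀ u : E, 𝓕 (⇑gw) u = (2 * π * ⟪u, w⟫ : ℝ) * Complex.I * 𝓕 (⇑f) u := by
    intro u
    rw [hgw]
    rw [← Real.fourier_continuousLinearMap_apply hfd]
    rw [hF]
    simp only [VectorFourier.fourierSMulRight_apply, ContinuousLinearMap.neg_apply,
      innerSL_apply_apply, neg_smul, smul_eq_mul, Complex.real_smul]
    rw [show (innerSL ℝ u) w = ⟪u, w⟫ from rfl]
    push_cast
    ring
  have hinv : 𝓕⁻ (𝓕 (⇑gw)) = ⇑gw :=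
    gw.continuous.fourierInv_fourier_eq gw.integrable (fourierT_integrable_FT gw)
  have hval : ∫ u : E, Complex.exp ((((2 * π * ⟪u, y⟫ : ℝ)) : ℂ) * Complex.I) * (𝓕 (⇑gw) u)
      = fderiv ℝ (⇑f) y w := by
    have := congrFun hinv y
    rw [Real.fourierInv_eq'] at this
    simp only [smul_eq_mul] at this
    rw [this, hgw]
  calc ∫ u : E, Complex.exp (Complex.I * ((⟪y, (2*π) • u⟫ : ℝ) : ℂ))
          * ((⟪w, (2*π) • u⟫ : ℝ) : ℂ) * 𝓕 (⇑f) u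
      = ∫ u : E, (-Complex.I) * (Complex.exp ((((2 * π * ⟪u, y⟫ : ℝ)) : ℂ) * Complex.I)
          * (𝓕 (⇑gw) u)) := by
        congr 1
        ext u
        rw [exp_inner_eq, hgwF u, real_inner_smul_right, real_inner_comm w u]
        push_cast
        ring_nf
        rw [Complex.I_sq]
        ring
    _ = -Complex.I * (fderiv ℝ (⇑f) y w) := by
        rw [MeasureTheory.integral_const_mul, hval]

lemma exp_neg_add (a b : ℝ) :
    Complex.exp (-(Complex.I * ((a:ℝ):ℂ))) * Complex.exp (-(Complex.I * ((b:ℝ):ℂ)))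
      = Complex.exp (-(Complex.I * ((a + b : ℝ):ℂ))) := by
  rw [← Complex.exp_add]; congr 1; push_cast; ring

lemma fourierT_soliton (σ ω : ℝ) (v : E) (Q : SchwartzMap E ℂ) (t : ℝ) (ξ : E) :
    fourierT (fun z => solitonWave σ ω v Q t z) ξ
      = Complex.exp (Complex.I * (t:ℂ) * (((‖v‖ ^ (2*σ) - ω ^ (2*σ) : ℝ)) : ℂ)) *
        (Complex.exp (-(Complex.I * ((⟪(2*t*σ*‖v‖ ^ (2*σ-2)) • v, ξ + v⟫ : ℝ) : ℂ))) *
          fourierT (⇑Q) (ξ + v)) := by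
  set θ : ℝ := 2*t*σ*‖v‖ ^ (2*σ-2) with hθ
  set P : ℂ := Complex.exp (Complex.I * (t:ℂ) * (((‖v‖ ^ (2*σ) - ω ^ (2*σ) : ℝ)) : ℂ)) with hP
  unfold fourierT solitonWave
  have hpt : ∀ x : E,
      Complex.exp (-(Complex.I * ((⟪x, ξ⟫ : ℝ) : ℂ))) *
        (P * Complex.exp (-(Complex.I * ((⟪v, x⟫ : ℝ) : ℂ))) * (⇑Q) (x - θ • v))
      = P * (Complex.exp (-(Complex.I * ((⟪x, ξ + v⟫ : ℝ) : ℂ))) * (⇑Q) (x - θ • v)) := by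
    intro x
    have h1 : (⟪x, ξ + v⟫ : ℝ) = ⟪x, ξ⟫ + ⟪v, x⟫ := by
      rw [inner_add_right, real_inner_comm v x]
    rw [h1, ← exp_neg_add]
    ring
  simp only [← hP, ← hθ]
  simp_rw [hpt]
  rw [MeasureTheory.integral_const_mul]
  congr 1
  have htr := MeasureTheory.integral_sub_right_eq_self (μ := (volume : Measure E))
    (fun z : E => Complex.exp (-(Complex.I * ((⟪z + θ • v, ξ + v⟫ : ℝ) : ℂ))) * (⇑Q) z) (θ • v)
  have heq : ∀ x : E,
      Complex.exp (-(Complex.I * ((⟪x, ξ + v⟫ : ℝ) : ℂ))) * (⇑Q) (x - θ • v)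
      = (fun z : E => Complex.exp (-(Complex.I * ((⟪z + θ • v, ξ + v⟫ : ℝ) : ℂ))) * (⇑Q) z)
          (x - θ • v) := by
    intro x
    simp only [sub_add_cancel]
  simp_rw [heq]
  rw [htr]
  have hpt2 : ∀ z : E,
      Complex.exp (-(Complex.I * ((⟪z + θ • v, ξ + v⟫ : ℝ) : ℂ))) * (⇑Q) z
      = Complex.exp (-(Complex.I * ((⟪θ • v, ξ + v⟫ : ℝ) : ℂ))) *
          (Complex.exp (-(Complex.I * ((⟪z, ξ + v⟫ : ℝ) : ℂ))) * (⇑Q) z) := by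
    intro z
    have h1 : (⟪z + θ • v, ξ + v⟫ : ℝ) = ⟪θ • v, ξ + v⟫ + ⟪z, ξ + v⟫ := by
      rw [inner_add_left]; ring
    rw [h1, ← exp_neg_add]
    ring
  simp_rw [hpt2]
  rw [MeasureTheory.integral_const_mul]

lemma exp_mixed (a b : ℝ) :
    Complex.exp (Complex.I * ((a:ℝ):ℂ)) * Complex.exp (-(Complex.I * ((b:ℝ):ℂ)))
      = Complex.exp (Complex.I * ((a - b : ℝ):ℂ)) := by
  rw [← Complex.exp_add]; congr 1; push_cast; ring

lemma pref_cancel (z : ℂ) :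
    ((((2 * π) ^ (-(d:ℝ)) : ℝ)) : ℂ) * (((2 * π : ℝ) ^ d : ℝ) • z) = z := by
  have h : ((2 * π : ℝ) ^ (-(d:ℝ)) : ℝ) = ((2 * π : ℝ) ^ d)⁻¹ := by
    rw [Real.rpow_neg (by positivity), Real.rpow_natCast]
  rw [h, Complex.real_smul, ← mul_assoc, ← Complex.ofReal_mul,
    inv_mul_cancel₀ (by positivity : ((2 * π : ℝ) ^ d) ≠ 0)]
  simp

lemma rpow_le_one_add_sq {τ : ℝ} (hτ1 : 0 < τ) (hτ2 : τ ≤ 2) (r : ℝ) (hr : 0 ≤ r) :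
    r ^ τ ≤ 1 + r ^ 2 := by
  rcases le_or_gt r 1 with h | h
  · have : r ^ τ ≤ 1 := Real.rpow_le_one hr h hτ1.le
    nlinarith [sq_nonneg r]
  · have h1 : r ^ τ ≤ r ^ (2:ℝ) := Real.rpow_le_rpow_of_exponent_le h.le hτ2
    have h2 : r ^ (2:ℝ) = r ^ (2:ℕ) := by
      rw [← Real.rpow_natCast r 2]; norm_num
    rw [h2] at h1
    nlinarith [h1]

lemma pSymbol_bound {σ : ℝ} (hσ1 : 0 < σ) (hσ2 : σ < 1) (v : E) (ξ : E) :
    |pSymbol σ v ξ| ≤ (1 + (1 + ‖v‖)^2 + ‖v‖ ^ (2*σ) + 2*σ*‖v‖ ^ (2*σ-2)*‖v‖) * (1 + ‖ξ‖) ^ 2 := by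
  have h2σ1 : (0:ℝ) < 2*σ := by linarith
  have h2σ2 : 2*σ ≤ 2 := by linarith
  have ha : ‖ξ - v‖ ^ (2*σ) ≤ 1 + ‖ξ - v‖ ^ 2 := rpow_le_one_add_sq h2σ1 h2σ2 _ (norm_nonneg _)
  have hnv : ‖ξ - v‖ ≤ ‖ξ‖ + ‖v‖ := norm_sub_le ξ v
  have hb : (0:ℝ) ≤ ‖v‖ ^ (2*σ) := Real.rpow_nonneg (norm_nonneg v) _
  have hc : (0:ℝ) ≤ 2*σ*‖v‖ ^ (2*σ-2) := by positivity
  have hinner : |(⟪v, ξ⟫ : ℝ)| ≤ ‖v‖ * ‖ξ‖ := abs_real_inner_le_norm v ξ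
  have habs : |pSymbol σ v ξ| ≤ ‖ξ - v‖ ^ (2*σ) + ‖v‖ ^ (2*σ) + 2*σ*‖v‖ ^ (2*σ-2) * (‖v‖ * ‖ξ‖) := by
    unfold pSymbol
    have h1 := abs_add_le (‖ξ - v‖ ^ (2*σ) - ‖v‖ ^ (2*σ)) (2*σ*‖v‖ ^ (2*σ-2) * ⟪v, ξ⟫)
    have h2 := abs_sub (‖ξ - v‖ ^ (2*σ)) (‖v‖ ^ (2*σ))
    have h3 : |‖ξ - v‖ ^ (2*σ)| = ‖ξ - v‖ ^ (2*σ) := abs_of_nonneg (Real.rpow_nonneg (norm_nonneg _) _)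
    have h4 : |‖v‖ ^ (2*σ)| = ‖v‖ ^ (2*σ) := abs_of_nonneg hb
    have h5 : |2*σ*‖v‖ ^ (2*σ-2) * ⟪v, ξ⟫| ≤ 2*σ*‖v‖ ^ (2*σ-2) * (‖v‖ * ‖ξ‖) := by
      rw [abs_mul, _root_.abs_of_nonneg hc]
      exact mul_le_mul_of_nonneg_left hinner hc
    calc |‖ξ - v‖ ^ (2*σ) - ‖v‖ ^ (2*σ) + 2*σ*‖v‖ ^ (2*σ-2) * ⟪v, ξ⟫|
        ≤ |‖ξ - v‖ ^ (2*σ) - ‖v‖ ^ (2*σ)| + |2*σ*‖v‖ ^ (2*σ-2) * ⟪v, ξ⟫| := h1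
      _ ≤ (|‖ξ - v‖ ^ (2*σ)| + |‖v‖ ^ (2*σ)|) + 2*σ*‖v‖ ^ (2*σ-2) * (‖v‖ * ‖ξ‖) := by
          refine add_le_add ?_ h5
          exact h2
      _ = ‖ξ - v‖ ^ (2*σ) + ‖v‖ ^ (2*σ) + 2*σ*‖v‖ ^ (2*σ-2) * (‖v‖ * ‖ξ‖) := by rw [h3, h4]
  refine habs.trans ?_
  have hsq : ‖ξ - v‖ ^ 2 ≤ (1 + ‖v‖)^2 * (1 + ‖ξ‖)^2 := by
    have h0 : ‖ξ - v‖ ≤ (1 + ‖v‖) * (1 + ‖ξ‖) := by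
      nlinarith [norm_nonneg ξ, norm_nonneg v, hnv]
    nlinarith [norm_nonneg ξ, norm_nonneg v, norm_nonneg (ξ - v)]
  have h1le : (1:ℝ) ≤ (1 + ‖ξ‖)^2 := by nlinarith [norm_nonneg ξ]
  have hξle : ‖ξ‖ ≤ (1 + ‖ξ‖)^2 := by nlinarith [norm_nonneg ξ]
  nlinarith [mul_le_mul_of_nonneg_left h1le hb, mul_le_mul_of_nonneg_left hξle (by positivity : (0:ℝ) ≤ 2*σ*‖v‖ ^ (2*σ-2) * ‖v‖), ha, hsq]

lemma fracLap_soliton (σ ω : ℝ) (hσ1 : 0 < σ) (hσ2 : σ < 1) (v : E)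
    (Q : SchwartzMap E ℂ) (t : ℝ) (x : E) :
    fracLap σ (fun z => solitonWave σ ω v Q t z) x
      = Complex.exp (Complex.I * (t:ℂ) * (((‖v‖ ^ (2*σ) - ω ^ (2*σ) : ℝ)) : ℂ)) *
        Complex.exp (-(Complex.I * ((⟪v, x⟫ : ℝ) : ℂ))) *
        (pOp σ v (⇑Q) (x - (2*t*σ*‖v‖ ^ (2*σ-2)) • v)
          + ((‖v‖ ^ (2*σ) : ℝ) : ℂ) * (⇑Q) (x - (2*t*σ*‖v‖ ^ (2*σ-2)) • v)
          + ((2*σ*‖v‖ ^ (2*σ-2) : ℝ) : ℂ) *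
              (Complex.I * (fderiv ℝ (⇑Q) (x - (2*t*σ*‖v‖ ^ (2*σ-2)) • v) v))) := by
  set θ : ℝ := 2*t*σ*‖v‖ ^ (2*σ-2) with hθ
  set y : E := x - θ • v with hy
  set P : ℂ := Complex.exp (Complex.I * (t:ℂ) * (((‖v‖ ^ (2*σ) - ω ^ (2*σ) : ℝ)) : ℂ)) with hP
  set K : ℂ := Complex.exp (-(Complex.I * ((⟪v, x⟫ : ℝ) : ℂ))) with hK
  set F : E → ℂ := fun η =>
    K * (Complex.exp (Complex.I * ((⟪y, η⟫ : ℝ) : ℂ)) * ((‖η - v‖ ^ (2*σ) : ℝ) : ℂ)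
      * fourierT (⇑Q) η) with hF
  -- step 1: rewrite the integrand
  unfold fracLap
  have hpt : ∀ ξ : E,
      Complex.exp (Complex.I * ((⟪x, ξ⟫ : ℝ) : ℂ)) * ((‖ξ‖ ^ (2*σ) : ℝ) : ℂ)
        * fourierT (fun z => solitonWave σ ω v Q t z) ξ
      = P * F (ξ + v) := by
    intro ξ
    rw [fourierT_soliton σ ω v Q t ξ, hF]
    simp only [← hθ, ← hP, ← hK]
    have hnrm : ‖ξ + v - v‖ = ‖ξ‖ := by rw [add_sub_cancel_right]
    rw [hnrm]
    have hexp : Complex.exp (Complex.I * ((⟪x, ξ⟫ : ℝ) : ℂ))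
        * Complex.exp (-(Complex.I * ((⟪θ • v, ξ + v⟫ : ℝ) : ℂ)))
        = K * Complex.exp (Complex.I * ((⟪y, ξ + v⟫ : ℝ) : ℂ)) := by
      rw [exp_mixed]
      rw [hK]
      have : Complex.exp (-(Complex.I * ((⟪v, x⟫ : ℝ) : ℂ)))
          * Complex.exp (Complex.I * ((⟪y, ξ + v⟫ : ℝ) : ℂ))
          = Complex.exp (Complex.I * ((⟪y, ξ + v⟫ : ℝ) : ℂ))
          * Complex.exp (-(Complex.I * ((⟪v, x⟫ : ℝ) : ℂ))) := by ring
      rw [this, exp_mixed]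
      congr 2
      rw [hy, inner_sub_left]
      rw [show (⟪x, ξ + v⟫ : ℝ) = ⟪x, ξ⟫ + ⟪v, x⟫ from by
        rw [inner_add_right, real_inner_comm v x]]
      ring
    calc Complex.exp (Complex.I * ((⟪x, ξ⟫ : ℝ) : ℂ)) * ((‖ξ‖ ^ (2*σ) : ℝ) : ℂ)
          * (P * (Complex.exp (-(Complex.I * ((⟪θ • v, ξ + v⟫ : ℝ) : ℂ)))
              * fourierT (⇑Q) (ξ + v)))
        = P * ((Complex.exp (Complex.I * ((⟪x, ξ⟫ : ℝ) : ℂ))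
            * Complex.exp (-(Complex.I * ((⟪θ • v, ξ + v⟫ : ℝ) : ℂ))))
            * ((‖ξ‖ ^ (2*σ) : ℝ) : ℂ) * fourierT (⇑Q) (ξ + v)) := by ring
      _ = P * (K * Complex.exp (Complex.I * ((⟪y, ξ + v⟫ : ℝ) : ℂ))
            * ((‖ξ‖ ^ (2*σ) : ℝ) : ℂ) * fourierT (⇑Q) (ξ + v)) := by rw [hexp]
      _ = P * (K * (Complex.exp (Complex.I * ((⟪y, ξ + v⟫ : ℝ) : ℂ))
            * ((‖ξ‖ ^ (2*σ) : ℝ) : ℂ) * fourierT (⇑Q) (ξ + v))) := by ring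
  simp_rw [hpt]
  rw [MeasureTheory.integral_const_mul]
  rw [MeasureTheory.integral_add_right_eq_self F v]
  rw [hF]
  rw [MeasureTheory.integral_const_mul]
  -- step 2: split the symbol
  have hsplit : ∀ η : E,
      Complex.exp (Complex.I * ((⟪y, η⟫ : ℝ) : ℂ)) * ((‖η - v‖ ^ (2*σ) : ℝ) : ℂ)
        * fourierT (⇑Q) η
      = Complex.exp (Complex.I * ((⟪y, η⟫ : ℝ) : ℂ)) * ((pSymbol σ v η : ℝ) : ℂ)
          * fourierT (⇑Q) η
        + ((‖v‖ ^ (2*σ) : ℝ) : ℂ) * (Complex.exp (Complex.I * ((⟪y, η⟫ : ℝ) : ℂ))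
            * fourierT (⇑Q) η)
        - ((2*σ*‖v‖ ^ (2*σ-2) : ℝ) : ℂ) * (Complex.exp (Complex.I * ((⟪y, η⟫ : ℝ) : ℂ))
            * ((⟪v, η⟫ : ℝ) : ℂ) * fourierT (⇑Q) η) := by
    intro η
    have hreal : (‖η - v‖ ^ (2*σ) : ℝ)
        = pSymbol σ v η + ‖v‖ ^ (2*σ) - (2*σ*‖v‖ ^ (2*σ-2)) * ⟪v, η⟫ := by
      unfold pSymbol; ring
    rw [hreal]
    push_cast
    ring
  simp_rw [hsplit]
  have int1 : Integrable (fun η : E =>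
      Complex.exp (Complex.I * ((⟪y, η⟫ : ℝ) : ℂ)) * ((pSymbol σ v η : ℝ) : ℂ)
        * fourierT (⇑Q) η) := by
    apply integrable_symbol_mul Q (pSymbol σ v) ?_ _ (fun ξ => pSymbol_bound hσ1 hσ2 v ξ) y
    unfold pSymbol
    apply Continuous.add
    apply Continuous.sub
    · exact ((continuous_id.sub continuous_const).norm).rpow_const
        (fun ξ => Or.inr (by positivity))
    · exact continuous_const
    · exact continuous_const.mul (continuous_const.inner continuous_id)
  have int2 : Integrable (fun η : E =>
      ((‖v‖ ^ (2*σ) : ℝ) : ℂ) * (Complex.exp (Complex.I * ((⟪y, η⟫ : ℝ) : ℂ))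
        * fourierT (⇑Q) η)) := by
    have h := integrable_symbol_mul Q (fun _ => (‖v‖ ^ (2*σ) : ℝ)) continuous_const
      (‖v‖ ^ (2*σ)) (fun ξ => by
        have h0 : (0:ℝ) ≤ ‖v‖ ^ (2*σ) := Real.rpow_nonneg (norm_nonneg v) _
        have h1 : (1:ℝ) ≤ (1 + ‖ξ‖)^2 := by nlinarith [norm_nonneg ξ]
        rw [_root_.abs_of_nonneg h0]
        nlinarith) y
    refine h.congr ?_
    filter_upwards with η
    ring
  have int3 : Integrable (fun η : E =>
      ((2*σ*‖v‖ ^ (2*σ-2) : ℝ) : ℂ) * (Complex.exp (Complex.I * ((⟪y, η⟫ : ℝ) : ℂ))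
        * ((⟪v, η⟫ : ℝ) : ℂ) * fourierT (⇑Q) η)) := by
    have h := integrable_symbol_mul Q (fun η => (2*σ*‖v‖ ^ (2*σ-2)) * ⟪v, η⟫)
      (continuous_const.mul (continuous_const.inner continuous_id))
      ((2*σ*‖v‖ ^ (2*σ-2)) * ‖v‖) (fun ξ => by
        have hc : (0:ℝ) ≤ 2*σ*‖v‖ ^ (2*σ-2) := by positivity
        have hinner : |(⟪v, ξ⟫ : ℝ)| ≤ ‖v‖ * ‖ξ‖ := abs_real_inner_le_norm v ξ
        have hξle : ‖ξ‖ ≤ (1 + ‖ξ‖)^2 := by nlinarith [norm_nonneg ξ]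
        rw [abs_mul, _root_.abs_of_nonneg hc]
        calc (2*σ*‖v‖ ^ (2*σ-2)) * |(⟪v, ξ⟫ : ℝ)| ≤ (2*σ*‖v‖ ^ (2*σ-2)) * (‖v‖ * ‖ξ‖) :=
              mul_le_mul_of_nonneg_left hinner hc
          _ ≤ (2*σ*‖v‖ ^ (2*σ-2)) * ‖v‖ * (1 + ‖ξ‖)^2 := by
              nlinarith [mul_nonneg hc (norm_nonneg v), hξle, norm_nonneg v, norm_nonneg ξ,
                mul_le_mul_of_nonneg_left hξle (mul_nonneg hc (norm_nonneg v))]) y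
    refine h.congr ?_
    filter_upwards with η
    push_cast
    ring
  have int12 : Integrable (fun η : E =>
      Complex.exp (Complex.I * ((⟪y, η⟫ : ℝ) : ℂ)) * ((pSymbol σ v η : ℝ) : ℂ)
          * fourierT (⇑Q) η
        + ((‖v‖ ^ (2*σ) : ℝ) : ℂ) * (Complex.exp (Complex.I * ((⟪y, η⟫ : ℝ) : ℂ))
            * fourierT (⇑Q) η)) := int1.add int2
  rw [MeasureTheory.integral_sub int12 int3, MeasureTheory.integral_add int1 int2]
  rw [MeasureTheory.integral_const_mul, MeasureTheory.integral_const_mul]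
  rw [inversion_formula Q y]
  have hderiv : ∫ η : E, Complex.exp (Complex.I * ((⟪y, η⟫ : ℝ) : ℂ)) * ((⟪v, η⟫ : ℝ) : ℂ)
      * fourierT (⇑Q) η = ((2 * π : ℝ) ^ d : ℝ) • (-Complex.I * (fderiv ℝ (⇑Q) y v)) :=
    deriv_formula Q v y
  rw [hderiv]
  -- final algebra
  have hpOp : pOp σ v (⇑Q) y
      = ((((2 * π) ^ (-(d:ℝ)) : ℝ)) : ℂ) *
        ∫ η : E, Complex.exp (Complex.I * ((⟪y, η⟫ : ℝ) : ℂ)) * ((pSymbol σ v η : ℝ) : ℂ)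
          * fourierT (⇑Q) η := rfl
  set pre : ℂ := ((((2 * π) ^ (-(d:ℝ)) : ℝ)) : ℂ) with hpre
  set I1 : ℂ := ∫ η : E, Complex.exp (Complex.I * ((⟪y, η⟫ : ℝ) : ℂ))
    * ((pSymbol σ v η : ℝ) : ℂ) * fourierT (⇑Q) η with hI1
  have hc2 : pre * (((2 * π : ℝ) ^ d : ℝ) • (⇑Q y)) = (⇑Q) y := pref_cancel _
  have hc3 : pre * (((2 * π : ℝ) ^ d : ℝ) • (-Complex.I * (fderiv ℝ (⇑Q) y v)))
      = -Complex.I * (fderiv ℝ (⇑Q) y v) := pref_cancel _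
  calc pre * (P * (K * (I1 + ((‖v‖ ^ (2*σ) : ℝ) : ℂ) * (((2 * π : ℝ) ^ d : ℝ) • (⇑Q y))
          - ((2*σ*‖v‖ ^ (2*σ-2) : ℝ) : ℂ)
            * (((2 * π : ℝ) ^ d : ℝ) • (-Complex.I * (fderiv ℝ (⇑Q) y v))))))
      = P * K * ((pre * I1) + ((‖v‖ ^ (2*σ) : ℝ) : ℂ)
          * (pre * (((2 * π : ℝ) ^ d : ℝ) • (⇑Q y)))
          - ((2*σ*‖v‖ ^ (2*σ-2) : ℝ) : ℂ)
            * (pre * (((2 * π : ℝ) ^ d : ℝ) • (-Complex.I * (fderiv ℝ (⇑Q) y v))))) := by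
        ring
    _ = P * K * (pOp σ v (⇑Q) y + ((‖v‖ ^ (2*σ) : ℝ) : ℂ) * (⇑Q) y
          + ((2*σ*‖v‖ ^ (2*σ-2) : ℝ) : ℂ) * (Complex.I * (fderiv ℝ (⇑Q) y v))) := by
        rw [hc2, hc3, hpOp]
        ring


theorem soliton_solves_focusing_fNLS
    (d : ℕ) (hd : 1 ≤ d) (σ : ℝ) (hσ : σ ∈ Set.Ioo (0:ℝ) 1)
    (p : ℝ) (hp : 1 < p) (ω : ℝ) (hω : 0 < ω)
    (v : EuclideanSpace ℝ (Fin d)) (hv : v ≠ 0)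
    (Q : SchwartzMap (EuclideanSpace ℝ (Fin d)) ℂ)
    (hQ : ∀ x : EuclideanSpace ℝ (Fin d),
      pOp σ v (fun y => Q y) x + ((ω ^ (2*σ) : ℝ) : ℂ) * Q x
        - ((‖Q x‖ ^ (p - 1) : ℝ) : ℂ) * Q x = 0) :
    ∀ (t : ℝ) (x : EuclideanSpace ℝ (Fin d)), ∃ ut : ℂ,
      HasDerivAt (fun s => solitonWave σ ω v Q s x) ut t ∧
      Complex.I * ut + fracLap σ (fun y => solitonWave σ ω v Q t y) x
        - ((‖solitonWave σ ω v Q t x‖ ^ (p - 1) : ℝ) : ℂ)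
          * solitonWave σ ω v Q t x = 0 := by
  obtain ⟨hσ1, hσ2⟩ := hσ
  intro t x
  -- abbreviations (only as terms, no `set`)
  have hQdiff : Differentiable ℝ (⇑Q) := Q.differentiable
  -- the profile point
  -- derivative of the path
  have hm : HasDerivAt (fun s : ℝ => 2*s*σ*‖v‖ ^ (2*σ-2)) (2*σ*‖v‖ ^ (2*σ-2)) t := by
    have heq : (fun s : ℝ => 2*s*σ*‖v‖ ^ (2*σ-2)) = fun s : ℝ => s * (2*σ*‖v‖ ^ (2*σ-2)) := by
      ext s; ring
    rw [heq]
    simpa using (hasDerivAt_id t).mul_const (2*σ*‖v‖ ^ (2*σ-2))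
  have hsm : HasDerivAt (fun s : ℝ => (2*s*σ*‖v‖ ^ (2*σ-2)) • v) ((2*σ*‖v‖ ^ (2*σ-2)) • v) t :=
    hm.smul_const v
  have hpath : HasDerivAt (fun s : ℝ => x - (2*s*σ*‖v‖ ^ (2*σ-2)) • v)
      (-((2*σ*‖v‖ ^ (2*σ-2)) • v)) t := hsm.const_sub x
  have hQfd : HasFDerivAt (⇑Q) (fderiv ℝ (⇑Q) (x - (2*t*σ*‖v‖ ^ (2*σ-2)) • v))
      (x - (2*t*σ*‖v‖ ^ (2*σ-2)) • v) := (hQdiff _).hasFDerivAt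
  have h3 : HasDerivAt (fun s : ℝ => (⇑Q) (x - (2*s*σ*‖v‖ ^ (2*σ-2)) • v))
      ((fderiv ℝ (⇑Q) (x - (2*t*σ*‖v‖ ^ (2*σ-2)) • v)) (-((2*σ*‖v‖ ^ (2*σ-2)) • v))) t :=
    hQfd.comp_hasDerivAt t hpath
  -- derivative of the phase
  have h0 : HasDerivAt (fun s : ℝ => (s:ℂ)) 1 t := by
    simpa using (hasDerivAt_id t).ofReal_comp
  have h1 : HasDerivAt (fun s : ℝ => Complex.exp (Complex.I * (s:ℂ)
      * (((‖v‖ ^ (2*σ) - ω ^ (2*σ) : ℝ)) : ℂ)))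
      (Complex.exp (Complex.I * (t:ℂ) * (((‖v‖ ^ (2*σ) - ω ^ (2*σ) : ℝ)) : ℂ))
        * (Complex.I * (((‖v‖ ^ (2*σ) - ω ^ (2*σ) : ℝ)) : ℂ))) t := by
    have := (((h0.const_mul Complex.I).mul_const
      (((‖v‖ ^ (2*σ) - ω ^ (2*σ) : ℝ)) : ℂ))).cexp
    simpa [mul_comm, mul_assoc, mul_left_comm] using this
  have h2 : HasDerivAt (fun s : ℝ => Complex.exp (Complex.I * (s:ℂ)
      * (((‖v‖ ^ (2*σ) - ω ^ (2*σ) : ℝ)) : ℂ))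
      * Complex.exp (-(Complex.I * ((⟪v, x⟫ : ℝ) : ℂ))))
      (Complex.exp (Complex.I * (t:ℂ) * (((‖v‖ ^ (2*σ) - ω ^ (2*σ) : ℝ)) : ℂ))
        * (Complex.I * (((‖v‖ ^ (2*σ) - ω ^ (2*σ) : ℝ)) : ℂ))
        * Complex.exp (-(Complex.I * ((⟪v, x⟫ : ℝ) : ℂ)))) t :=
    h1.mul_const _
  have hu : HasDerivAt (fun s => solitonWave σ ω v Q s x)
      (Complex.exp (Complex.I * (t:ℂ) * (((‖v‖ ^ (2*σ) - ω ^ (2*σ) : ℝ)) : ℂ))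
        * (Complex.I * (((‖v‖ ^ (2*σ) - ω ^ (2*σ) : ℝ)) : ℂ))
        * Complex.exp (-(Complex.I * ((⟪v, x⟫ : ℝ) : ℂ)))
        * (⇑Q) (x - (2*t*σ*‖v‖ ^ (2*σ-2)) • v)
       + (Complex.exp (Complex.I * (t:ℂ) * (((‖v‖ ^ (2*σ) - ω ^ (2*σ) : ℝ)) : ℂ))
        * Complex.exp (-(Complex.I * ((⟪v, x⟫ : ℝ) : ℂ))))
        * ((fderiv ℝ (⇑Q) (x - (2*t*σ*‖v‖ ^ (2*σ-2)) • v))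
            (-((2*σ*‖v‖ ^ (2*σ-2)) • v)))) t := by
    have := h2.mul h3
    exact this
  refine ⟨_, hu, ?_⟩
  -- now the PDE
  rw [fracLap_soliton σ ω hσ1 hσ2 v Q t x]
  -- modulus of the wave
  have habs1 : ‖(Complex.exp (Complex.I * (t:ℂ)
      * (((‖v‖ ^ (2*σ) - ω ^ (2*σ) : ℝ)) : ℂ)))‖ = 1 := by
    rw [show Complex.I * (t:ℂ) * (((‖v‖ ^ (2*σ) - ω ^ (2*σ) : ℝ)) : ℂ)
        = ((t * (‖v‖ ^ (2*σ) - ω ^ (2*σ)) : ℝ) : ℂ) * Complex.I from by push_cast; ring]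
    exact Complex.norm_exp_ofReal_mul_I _
  have habs2 : ‖(Complex.exp (-(Complex.I * ((⟪v, x⟫ : ℝ) : ℂ))))‖ = 1 := by
    rw [show -(Complex.I * ((⟪v, x⟫ : ℝ) : ℂ)) = ((-⟪v, x⟫ : ℝ) : ℂ) * Complex.I from by
      push_cast; ring]
    exact Complex.norm_exp_ofReal_mul_I _
  have hmod : ‖solitonWave σ ω v Q t x‖
      = ‖(⇑Q) (x - (2*t*σ*‖v‖ ^ (2*σ-2)) • v)‖ := by
    unfold solitonWave
    rw [norm_mul, norm_mul, habs1, habs2]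
    ring
  have husol : solitonWave σ ω v Q t x
      = Complex.exp (Complex.I * (t:ℂ) * (((‖v‖ ^ (2*σ) - ω ^ (2*σ) : ℝ)) : ℂ))
        * Complex.exp (-(Complex.I * ((⟪v, x⟫ : ℝ) : ℂ)))
        * (⇑Q) (x - (2*t*σ*‖v‖ ^ (2*σ-2)) • v) := rfl
  rw [hmod, husol]
  -- the directional derivative
  have hD3 : (fderiv ℝ (⇑Q) (x - (2*t*σ*‖v‖ ^ (2*σ-2)) • v)) (-((2*σ*‖v‖ ^ (2*σ-2)) • v))
      = -(((2*σ*‖v‖ ^ (2*σ-2) : ℝ)) : ℂ)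
        * ((fderiv ℝ (⇑Q) (x - (2*t*σ*‖v‖ ^ (2*σ-2)) • v)) v) := by
    rw [← neg_smul, ContinuousLinearMap.map_smul]
    rw [Complex.real_smul]
    push_cast
    ring
  rw [hD3]
  -- the profile equation at the shifted point
  have hQy := hQ (x - (2*t*σ*‖v‖ ^ (2*σ-2)) • v)
  have hpOpy : pOp σ v (⇑Q) (x - (2*t*σ*‖v‖ ^ (2*σ-2)) • v)
      = ((‖(⇑Q) (x - (2*t*σ*‖v‖ ^ (2*σ-2)) • v)‖ ^ (p - 1) : ℝ) : ℂ)
          * (⇑Q) (x - (2*t*σ*‖v‖ ^ (2*σ-2)) • v)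
        - ((ω ^ (2*σ) : ℝ) : ℂ) * (⇑Q) (x - (2*t*σ*‖v‖ ^ (2*σ-2)) • v) := by
    linear_combination hQy
  rw [hpOpy]
  have hβ : (((‖v‖ ^ (2*σ) - ω ^ (2*σ) : ℝ)) : ℂ)
      = ((‖v‖ ^ (2*σ) : ℝ) : ℂ) - ((ω ^ (2*σ) : ℝ) : ℂ) := by push_cast; ring
  rw [hβ]
  linear_combination ((((‖v‖ ^ (2*σ) : ℝ) : ℂ) - ((ω ^ (2*σ) : ℝ) : ℂ))
    * Complex.exp (Complex.I * (t:ℂ) * ((((‖v‖ ^ (2*σ) : ℝ) : ℂ) - ((ω ^ (2*σ) : ℝ) : ℂ)))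
      )) * Complex.exp (-(Complex.I * ((⟪v, x⟫ : ℝ) : ℂ)))
    * ((⇑Q) (x - (2*t*σ*‖v‖ ^ (2*σ-2)) • v)) * Complex.I_sq
end
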